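/- Let (X,d) be a complete and bounded metric space, I a nonempty finite set, φ : [0,∞) → [0,∞) a comparison function, and for each i ∈ I let f_i : X → X be a φ-contraction. Then for every infinite word α = α₁α₂… ∈ Λ(I), the intersection ⋂_{n∈ℕ*} X_{[α]_n} consists of exactly one element. -/

import Mathlib

open Filter Topology Set

/-- `φ : [0,∞) → [0,∞)` is a comparison function: it maps `[0,∞)` into `[0,∞)`,
is increasing, satisfies `φ t < t` for `t > 0`, and is right-continuous. -/
def IsComparisonFn (φ : ℝ → ℝ) : Prop :=
  (∀ t : ℝ, 0 ≤ t → 0 ≤ φ t) ∧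
  MonotoneOn φ (Set.Ici (0 : ℝ)) ∧
  (∀ t : ℝ, 0 < t → φ t < t) ∧
  (∀ t : ℝ, 0 ≤ t → ContinuousWithinAt φ (Set.Ici t) t)

/-- `f_{α₁…αₙ} = f_{α₁} ∘ f_{α₂} ∘ … ∘ f_{αₙ}` (the identity for the empty word). -/
def WordMap {X I : Type*} (f : I → X → X) : List I → X → X
  | [] => id
  | i :: w => f i ∘ WordMap f w

/-- `[α]_n`: the finite word consisting of the first `n` letters of the infinite word `α`. -/
def Pref {I : Type*} (α : ℕ → I) (n : ℕ) : List I := List.ofFn (fun k : Fin n => α (k : ℕ))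

/-- `X_w = f_w(X)`, the image of the whole space under the word map. -/
def WordSet {X I : Type*} (f : I → X → X) (w : List I) : Set X := Set.range (WordMap f w)

/-- A family `(f_i)_{i ∈ I}` of self-maps of `X` has attractor if:
(a) for every infinite word `α`, `⋂ₙ X_{[α]ₙ}` has a unique element `a_α`;
(b) whenever `a_α ≠ a_β`, some `X_{[α]_{n₀}}` and `X_{[β]_{n₀}}` are disjoint. -/
def HasAttractor {X I : Type*} (f : I → X → X) : Prop :=
  (∀ α : ℕ → I, ∃! a : X, ∀ n : ℕ, a ∈ WordSet f (Pref α n)) ∧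
  (∀ α β : ℕ → I, ∀ a b : X,
    (∀ n : ℕ, a ∈ WordSet f (Pref α n)) → (∀ n : ℕ, b ∈ WordSet f (Pref β n)) →
    a ≠ b →
    ∃ n₀ : ℕ, WordSet f (Pref α n₀) ∩ WordSet f (Pref β n₀) = ∅)

lemma comparison_le {φ : ℝ → ℝ} (hφ : IsComparisonFn φ) {t : ℝ} (ht : 0 ≤ t) : φ t ≤ t := by
  rcases ht.eq_or_lt with h | h
  · subst h
    by_contra hc
    push_neg at hc
    have h1 := hφ.2.2.1 (φ 0) hc
    have h2 := hφ.2.1 (self_mem_Ici) (mem_Ici.mpr (hφ.1 0 le_rfl)) (hφ.1 0 le_rfl)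
    linarith
  · exact (hφ.2.2.1 t h).le

lemma comparison_iter_nonneg {φ : ℝ → ℝ} (hφ : IsComparisonFn φ) {C : ℝ} (hC : 0 ≤ C) :
    ∀ n, 0 ≤ φ^[n] C := by
  intro n; induction n with
  | zero => simpa
  | succ n ih => rw [Function.iterate_succ_apply']; exact hφ.1 _ ih

lemma comparison_iter_tendsto {φ : ℝ → ℝ} (hφ : IsComparisonFn φ) {C : ℝ} (hC : 0 ≤ C) :
    Tendsto (fun n => φ^[n] C) atTop (𝓝 0) := by
  set u : ℕ → ℝ := fun n => φ^[n] C with hu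
  have hnn : ∀ n, 0 ≤ u n := comparison_iter_nonneg hφ hC
  have hanti : Antitone u := antitone_nat_of_succ_le fun n => by
    show φ^[n+1] C ≤ φ^[n] C
    rw [Function.iterate_succ_apply']; exact comparison_le hφ (hnn n)
  have hbdd : BddBelow (range u) := ⟨0, by rintro x ⟨n, rfl⟩; exact hnn n⟩
  have hlim : Tendsto u atTop (𝓝 (⨅ n, u n)) := tendsto_atTop_ciInf hanti hbdd
  have hL0 : 0 ≤ ⨅ n, u n := le_ciInf hnn
  rcases hL0.eq_or_lt with h | h
  · rwa [← h] at hlim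
  · exfalso
    set L := ⨅ n, u n
    have hge : ∀ n, L ≤ u n := fun n => ciInf_le hbdd n
    have h1 : Tendsto u atTop (𝓝[Set.Ici L] L) :=
      tendsto_nhdsWithin_of_tendsto_nhds_of_eventually_within _ hlim
        (Eventually.of_forall hge)
    have h2 : Tendsto (fun n => φ (u n)) atTop (𝓝 (φ L)) :=
      ((hφ.2.2.2 L hL0).tendsto).comp h1
    have h3 : Tendsto (fun n => u (n + 1)) atTop (𝓝 L) :=
      hlim.comp (tendsto_add_atTop_nat 1)
    have heq : (fun n => φ (u n)) = fun n => u (n + 1) := by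
      funext n; simp [hu, Function.iterate_succ_apply']
    rw [heq] at h2
    have : φ L = L := tendsto_nhds_unique h2 h3
    linarith [hφ.2.2.1 L h]

lemma Pref_succ {I : Type*} (α : ℕ → I) (n : ℕ) :
    Pref α (n + 1) = α 0 :: Pref (fun k => α (k + 1)) n := by
  simp [Pref, List.ofFn_succ]

lemma wordmap_dist {X I : Type*} [MetricSpace X] {φ : ℝ → ℝ} (hφ : IsComparisonFn φ)
    {f : I → X → X} (hf : ∀ i : I, ∀ x y : X, dist (f i x) (f i y) ≤ φ (dist x y))
    {C : ℝ} (hC : ∀ x y : X, dist x y ≤ C) (hC0 : 0 ≤ C) :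
    ∀ w : List I, ∀ x y : X, dist (WordMap f w x) (WordMap f w y) ≤ φ^[w.length] C := by
  intro w
  induction w with
  | nil => intro x y; simpa [WordMap] using hC x y
  | cons i w ih =>
    intro x y
    have h1 := hf i (WordMap f w x) (WordMap f w y)
    have h2 : φ (dist (WordMap f w x) (WordMap f w y)) ≤ φ (φ^[w.length] C) :=
      hφ.2.1 (mem_Ici.mpr dist_nonneg)
        (mem_Ici.mpr (comparison_iter_nonneg hφ hC0 _)) (ih x y)
    calc dist (WordMap f (i :: w) x) (WordMap f (i :: w) y)
        ≤ φ (dist (WordMap f w x) (WordMap f w y)) := h1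
      _ ≤ φ (φ^[w.length] C) := h2
      _ = φ^[(i :: w).length] C := by
          rw [List.length_cons, Function.iterate_succ_apply']

/-- For an IFS of `φ`-contractions on a complete bounded metric space,
`⋂ₙ X_{[α]ₙ}` is a singleton for every infinite word `α`. -/
theorem ifs_iInter_singleton {X I : Type*} [MetricSpace X] [CompleteSpace X] [Nonempty X]
    [Finite I] [Nonempty I]
    (hbdd : ∃ C : ℝ, ∀ x y : X, dist x y ≤ C)
    (φ : ℝ → ℝ) (hφ : IsComparisonFn φ)
    (f : I → X → X) (hf : ∀ i : I, ∀ x y : X, dist (f i x) (f i y) ≤ φ (dist x y)) :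
    ∀ α : ℕ → I, ∃! a : X, ∀ n : ℕ, a ∈ WordSet f (Pref α n) := by
  obtain ⟨C, hC⟩ := hbdd
  obtain ⟨x₀⟩ := ‹Nonempty X›
  have hC0 : (0 : ℝ) ≤ C := le_trans (by simp) (hC x₀ x₀)
  have hcont : ∀ i, Continuous (f i) := by
    intro i
    refine (LipschitzWith.of_dist_le_mul (K := 1) fun x y => ?_).continuous
    calc dist (f i x) (f i y) ≤ φ (dist x y) := hf i x y
      _ ≤ dist x y := comparison_le hφ dist_nonneg
      _ = 1 * dist x y := (one_mul _).symm
  set x : ℕ → (ℕ → I) → X := fun n α => WordMap f (Pref α n) x₀ with hx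
  -- membership of the tail points
  have hmem : ∀ n k : ℕ, ∀ α : ℕ → I, x (n + k) α ∈ WordSet f (Pref α n) := by
    intro n
    induction n with
    | zero => intro k α; exact ⟨x (0 + k) α, by simp [Pref, WordMap]⟩
    | succ n ih =>
      intro k α
      obtain ⟨z, hz⟩ := ih k (fun m => α (m + 1))
      refine ⟨z, ?_⟩
      have hnk : n + 1 + k = (n + k) + 1 := by ring
      show WordMap f (Pref α (n + 1)) z = WordMap f (Pref α (n + 1 + k)) x₀
      rw [hnk, Pref_succ, Pref_succ]
      show (f (α 0) ∘ WordMap f (Pref (fun m => α (m + 1)) n)) z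
          = (f (α 0) ∘ WordMap f (Pref (fun m => α (m + 1)) (n + k))) x₀
      simp only [Function.comp_apply]
      rw [hz]
  -- length of prefixes
  have hlen : ∀ (α : ℕ → I) n, (Pref α n).length = n := fun α n => by simp [Pref]
  -- diameter bound within a WordSet
  have hdiam : ∀ (α : ℕ → I) n, ∀ a b : X, a ∈ WordSet f (Pref α n) →
      b ∈ WordSet f (Pref α n) → dist a b ≤ φ^[n] C := by
    rintro α n a b ⟨p, rfl⟩ ⟨q, rfl⟩
    have := wordmap_dist hφ hf hC hC0 (Pref α n) p q
    rwa [hlen] at this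
  -- Cauchy
  have hcauchy : ∀ α : ℕ → I, CauchySeq (fun n => x n α) := by
    intro α
    refine cauchySeq_of_le_tendsto_0 (fun n => φ^[n] C) (fun n m N hn hm => ?_)
      (comparison_iter_tendsto hφ hC0)
    obtain ⟨k1, rfl⟩ := Nat.exists_eq_add_of_le hn
    obtain ⟨k2, rfl⟩ := Nat.exists_eq_add_of_le hm
    exact hdiam α N _ _ (hmem N k1 α) (hmem N k2 α)
  have hA : ∀ α : ℕ → I, ∃ a : X, Tendsto (fun n => x n α) atTop (𝓝 a) :=
    fun α => cauchySeq_tendsto_of_complete (hcauchy α)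
  set A : (ℕ → I) → X := fun α => (hA α).choose with hAdef
  have hAt : ∀ α, Tendsto (fun n => x n α) atTop (𝓝 (A α)) := fun α => (hA α).choose_spec
  -- recursion
  have hrec : ∀ α : ℕ → I, A α = f (α 0) (A (fun k => α (k + 1))) := by
    intro α
    have h1 : Tendsto (fun n => x (n + 1) α) atTop (𝓝 (A α)) :=
      (hAt α).comp (tendsto_add_atTop_nat 1)
    have heq : (fun n => x (n + 1) α) = fun n => f (α 0) (x n (fun k => α (k + 1))) := by
      funext n
      show WordMap f (Pref α (n + 1)) x₀ = _
      rw [Pref_succ]; rfl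
    rw [heq] at h1
    have h2 : Tendsto (fun n => f (α 0) (x n (fun k => α (k + 1)))) atTop
        (𝓝 (f (α 0) (A (fun k => α (k + 1))))) :=
      ((hcont (α 0)).tendsto _).comp (hAt _)
    exact tendsto_nhds_unique h1 h2
  -- membership of the limit
  have hAmem : ∀ n : ℕ, ∀ α : ℕ → I, A α ∈ WordSet f (Pref α n) := by
    intro n
    induction n with
    | zero => intro α; exact ⟨A α, by simp [Pref, WordMap]⟩
    | succ n ih =>
      intro α
      obtain ⟨z, hz⟩ := ih (fun k => α (k + 1))
      refine ⟨z, ?_⟩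
      rw [Pref_succ]
      show (f (α 0) ∘ WordMap f (Pref (fun k => α (k + 1)) n)) z = A α
      simp only [Function.comp_apply, hz]
      exact (hrec α).symm
  intro α
  refine ⟨A α, fun n => hAmem n α, fun b hb => ?_⟩
  have hd : ∀ n, dist b (A α) ≤ φ^[n] C := fun n =>
    hdiam α n b (A α) (hb n) (hAmem n α)
  have : dist b (A α) ≤ 0 :=
    ge_of_tendsto (comparison_iter_tendsto hφ hC0) (Eventually.of_forall hd)
  exact dist_le_zero.mp this
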